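/- Let n ≥ 2, Σ, Σ_1, …, Σ_n ∈ S_+(d), p_1,…,p_n ∈ (0,1) with Σ_i p_i = 1. The inequality '∀ ξ ∈ R^d, √(ξ*Σξ) ≤ Σ_i p_i √(ξ*Σ_i ξ)' is equivalent to: for every skew-symmetric matrix M ∈ R^{n×n}, Σ ≤ Σ_{i=1}^n p_i Σ_{j=1}^n e^{M_{ij}} p_j Σ_i (inequality in the positive semi-definite order). -/

import Mathlib

open MeasureTheory ProbabilityTheory Matrix

noncomputable def stdGaussianPi (d : ℕ) : Measure (Fin d → ℝ) :=
  Measure.pi fun _ => gaussianReal 0 1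

/-- The square root of a positive semidefinite matrix, as defined in the older Mathlib
(`Matrix.PosSemidef.sqrt`, since removed). -/
noncomputable def Matrix.PosSemidef.sqrt {n 𝕜 : Type*} [Fintype n] [DecidableEq n] [RCLike 𝕜]
    [PartialOrder 𝕜] [StarOrderedRing 𝕜] {A : Matrix n n 𝕜} (hA : A.PosSemidef) : Matrix n n 𝕜 :=
  (hA.1.eigenvectorUnitary : Matrix n n 𝕜) *
    diagonal (fun i => ((Real.sqrt (hA.1.eigenvalues i) : ℝ) : 𝕜)) *
    (star hA.1.eigenvectorUnitary : Matrix n n 𝕜)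

/-- The Gaussian law `N_d(m, S)` on `ℝ^d`, defined as the image of the standard Gaussian
by `z ↦ m + S^{1/2} z`. -/
noncomputable def gaussianPi {d : ℕ} (m : Fin d → ℝ) {S : Matrix (Fin d) (Fin d) ℝ}
    (hS : S.PosSemidef) : Measure (Fin d → ℝ) :=
  Measure.map (fun z => m + hS.sqrt.mulVec z) (stdGaussianPi d)

/-- Convex order between measures: `μ ≤_cx ν`. -/
def ConvexOrder {E : Type*} [NormedAddCommGroup E] [NormedSpace ℝ E] [MeasurableSpace E]
    (μ ν : Measure E) : Prop :=
  ∀ φ : E → ℝ, ConvexOn ℝ Set.univ φ → Integrable φ μ → Integrable φ ν →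
    ∫ x, φ x ∂μ ≤ ∫ x, φ x ∂ν

lemma key1 {n : ℕ} (p a : Fin n → ℝ) (hp : ∀ i, 0 ≤ p i)
    (M : Matrix (Fin n) (Fin n) ℝ) (hM : Mᵀ = -M) :
    (∑ i, p i * a i) ^ 2 ≤ ∑ i, ∑ j, p i * Real.exp (M i j) * p j * (a i) ^ 2 := by
  have h1 : (∑ i, p i * a i) ^ 2 = ∑ i, ∑ j, (p i * a i) * (p j * a j) := by
    rw [sq, Finset.sum_mul_sum]
  rw [h1]
  have h2 : ∀ i j, (p i * a i) * (p j * a j) ≤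
      (p i * Real.exp (M i j) * p j * a i ^ 2 + p j * Real.exp (M j i) * p i * a j ^ 2) / 2 := by
    intro i j
    have hji : M j i = - M i j := by
      have := congrFun (congrFun hM i) j
      simpa [Matrix.transpose_apply] using this
    rw [hji, Real.exp_neg]
    set t := Real.exp (M i j) with ht
    have htpos : 0 < t := Real.exp_pos _
    have key : a i * a j ≤ (t * a i ^ 2 + t⁻¹ * a j ^ 2) / 2 := by
      have h5 : t * t⁻¹ = 1 := mul_inv_cancel₀ htpos.ne'
      nlinarith [mul_nonneg (inv_nonneg.mpr htpos.le) (sq_nonneg (t * a i - a j)),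
        sq_nonneg (t * a i - a j)]
    have hpp : 0 ≤ p i * p j := mul_nonneg (hp i) (hp j)
    calc (p i * a i) * (p j * a j) = (p i * p j) * (a i * a j) := by ring
      _ ≤ (p i * p j) * ((t * a i ^ 2 + t⁻¹ * a j ^ 2) / 2) :=
          mul_le_mul_of_nonneg_left key hpp
      _ = (p i * t * p j * a i ^ 2 + p j * t⁻¹ * p i * a j ^ 2) / 2 := by ring
  have hswap : ∑ i, ∑ j, p j * Real.exp (M j i) * p i * a j ^ 2
      = ∑ i, ∑ j, p i * Real.exp (M i j) * p j * a i ^ 2 := Finset.sum_comm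
  calc ∑ i, ∑ j, (p i * a i) * (p j * a j)
      ≤ ∑ i, ∑ j, (p i * Real.exp (M i j) * p j * a i ^ 2
          + p j * Real.exp (M j i) * p i * a j ^ 2) / 2 :=
        Finset.sum_le_sum fun i _ => Finset.sum_le_sum fun j _ => h2 i j
    _ = ((∑ i, ∑ j, p i * Real.exp (M i j) * p j * a i ^ 2)
          + ∑ i, ∑ j, p j * Real.exp (M j i) * p i * a j ^ 2) / 2 := by
        simp [Finset.sum_add_distrib, ← Finset.sum_div]
    _ = ∑ i, ∑ j, p i * Real.exp (M i j) * p j * a i ^ 2 := by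
        rw [hswap]; ring

lemma key2 {n : ℕ} (p b : Fin n → ℝ) (hb : ∀ i, 0 ≤ b i) (hp : ∀ i, 0 ≤ p i)
    (hp1 : ∑ i, p i = 1) (c : ℝ)
    (h : ∀ M : Matrix (Fin n) (Fin n) ℝ, Mᵀ = -M →
      c ≤ ∑ i, ∑ j, p i * Real.exp (M i j) * p j * b i) :
    Real.sqrt c ≤ ∑ i, p i * Real.sqrt (b i) := by
  refine le_of_forall_pos_le_add fun ε hε => ?_
  set a := fun i => Real.sqrt (b i) with ha
  have hapos : ∀ i, 0 < a i + ε := fun i =>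
    add_pos_of_nonneg_of_pos (Real.sqrt_nonneg _) hε
  set M : Matrix (Fin n) (Fin n) ℝ :=
    Matrix.of fun i j => Real.log (a j + ε) - Real.log (a i + ε) with hMdef
  have hskew : Mᵀ = -M := by
    ext i j
    simp [hMdef, Matrix.transpose_apply]
  have hMij : ∀ i j, Real.exp (M i j) = (a j + ε) / (a i + ε) := by
    intro i j
    rw [hMdef]
    simp only [Matrix.of_apply]
    rw [Real.exp_sub, Real.exp_log (hapos j), Real.exp_log (hapos i)]
  have hterm : ∀ i j, p i * Real.exp (M i j) * p j * b i
      ≤ p i * (a i + ε) * (p j * (a j + ε)) := by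
    intro i j
    rw [hMij i j]
    have hbi : b i = a i ^ 2 := (Real.sq_sqrt (hb i)).symm
    have hfrac : b i / (a i + ε) ≤ a i + ε := by
      rw [div_le_iff₀ (hapos i), hbi]
      nlinarith [Real.sqrt_nonneg (b i), hε.le]
    have := mul_le_mul_of_nonneg_left hfrac
      (mul_nonneg (mul_nonneg (hp i) (hapos j).le) (hp j))
    calc p i * ((a j + ε) / (a i + ε)) * p j * b i
        = p i * (a j + ε) * p j * (b i / (a i + ε)) := by ring
      _ ≤ p i * (a j + ε) * p j * (a i + ε) := by
          exact mul_le_mul_of_nonneg_left hfrac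
            (mul_nonneg (mul_nonneg (hp i) (hapos j).le) (hp j))
      _ = p i * (a i + ε) * (p j * (a j + ε)) := by ring
  have hsum : c ≤ (∑ i, p i * (a i + ε)) ^ 2 := by
    calc c ≤ ∑ i, ∑ j, p i * Real.exp (M i j) * p j * b i := h M hskew
      _ ≤ ∑ i, ∑ j, p i * (a i + ε) * (p j * (a j + ε)) :=
        Finset.sum_le_sum fun i _ => Finset.sum_le_sum fun j _ => hterm i j
      _ = (∑ i, p i * (a i + ε)) ^ 2 := by rw [sq, Finset.sum_mul_sum]
  have hbase : 0 ≤ ∑ i, p i * (a i + ε) :=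
    Finset.sum_nonneg fun i _ => mul_nonneg (hp i) (hapos i).le
  have := Real.sqrt_le_sqrt hsum
  rw [Real.sqrt_sq hbase] at this
  calc Real.sqrt c ≤ ∑ i, p i * (a i + ε) := this
    _ = (∑ i, p i * a i) + ε := by
        simp [mul_add, Finset.sum_add_distrib, ← Finset.sum_mul, hp1]
    _ = (∑ i, p i * Real.sqrt (b i)) + ε := rfl

theorem stmt5 {n d : ℕ} (hn : 2 ≤ n)
    {S : Matrix (Fin d) (Fin d) ℝ} {Ss : Fin n → Matrix (Fin d) (Fin d) ℝ}
    (hS : S.PosSemidef) (hSs : ∀ i, (Ss i).PosSemidef)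
    (p : Fin n → ℝ) (hp : ∀ i, p i ∈ Set.Ioo (0:ℝ) 1) (hp1 : ∑ i, p i = 1) :
    (∀ ξ : Fin d → ℝ,
        Real.sqrt (ξ ⬝ᵥ S.mulVec ξ) ≤ ∑ i, p i * Real.sqrt (ξ ⬝ᵥ (Ss i).mulVec ξ)) ↔
      ∀ M : Matrix (Fin n) (Fin n) ℝ, Mᵀ = -M →
        ((∑ i, (∑ j, p i * Real.exp (M i j) * p j) • Ss i) - S).PosSemidef := by
  have hp0 : ∀ i, 0 ≤ p i := fun i => (hp i).1.le
  have quad : ∀ (M : Matrix (Fin n) (Fin n) ℝ) (ξ : Fin d → ℝ),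
      ξ ⬝ᵥ ((∑ i, (∑ j, p i * Real.exp (M i j) * p j) • Ss i) - S) *ᵥ ξ
        = (∑ i, ∑ j, p i * Real.exp (M i j) * p j * (ξ ⬝ᵥ (Ss i) *ᵥ ξ)) - ξ ⬝ᵥ S *ᵥ ξ := by
    intro M ξ
    rw [Matrix.sub_mulVec, dotProduct_sub]
    congr 1
    have hsum : (∑ i, (∑ j, p i * Real.exp (M i j) * p j) • Ss i) *ᵥ ξ
        = ∑ i, ((∑ j, p i * Real.exp (M i j) * p j) • Ss i) *ᵥ ξ :=
      map_sum (Matrix.mulVec.addMonoidHomLeft ξ) _ Finset.univ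
    rw [hsum]
    have hdot : ξ ⬝ᵥ (∑ i, ((∑ j, p i * Real.exp (M i j) * p j) • Ss i) *ᵥ ξ)
        = ∑ i, ξ ⬝ᵥ (((∑ j, p i * Real.exp (M i j) * p j) • Ss i) *ᵥ ξ) := by
      simp only [dotProduct, Finset.sum_apply, Finset.mul_sum]
      exact Finset.sum_comm
    rw [hdot]
    refine Finset.sum_congr rfl fun i _ => ?_
    rw [Matrix.smul_mulVec, dotProduct_smul, smul_eq_mul, Finset.sum_mul]
  constructor
  · intro h M hM
    refine Matrix.PosSemidef.of_dotProduct_mulVec_nonneg ?_ fun ξ => ?_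
    · refine Matrix.IsHermitian.sub ?_ hS.1
      show (∑ i, _ • Ss i)ᴴ = _
      rw [Matrix.conjTranspose_sum]
      exact Finset.sum_congr rfl fun i _ => by
        rw [Matrix.conjTranspose_smul]; rw [(hSs i).1]; simp
    · have hstar : star ξ = ξ := by
        funext i; simp
      rw [hstar, quad M ξ, sub_nonneg]
      set a := fun i => Real.sqrt (ξ ⬝ᵥ (Ss i) *ᵥ ξ) with ha
      have hb : ∀ i, ξ ⬝ᵥ (Ss i) *ᵥ ξ = a i ^ 2 := fun i =>
        (Real.sq_sqrt (by simpa using (hSs i).dotProduct_mulVec_nonneg ξ)).symm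
      calc ξ ⬝ᵥ S *ᵥ ξ = Real.sqrt (ξ ⬝ᵥ S *ᵥ ξ) ^ 2 :=
            (Real.sq_sqrt (by simpa using hS.dotProduct_mulVec_nonneg ξ)).symm
        _ ≤ (∑ i, p i * a i) ^ 2 := by
            apply pow_le_pow_left₀ (Real.sqrt_nonneg _) (h ξ)
        _ ≤ ∑ i, ∑ j, p i * Real.exp (M i j) * p j * (a i) ^ 2 :=
            key1 p a hp0 M hM
        _ = ∑ i, ∑ j, p i * Real.exp (M i j) * p j * (ξ ⬝ᵥ (Ss i) *ᵥ ξ) := by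
            simp_rw [hb]
  · intro h ξ
    refine key2 p (fun i => ξ ⬝ᵥ (Ss i) *ᵥ ξ) (fun i => by simpa using (hSs i).dotProduct_mulVec_nonneg ξ)
      hp0 hp1 _ fun M hM => ?_
    have := (h M hM).dotProduct_mulVec_nonneg ξ
    have hstar : star ξ = ξ := by funext i; simp
    rw [hstar, quad M ξ, sub_nonneg] at this
    exact this
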